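/- Let 𝒢 be a class of finite simple graphs with bounded tree depth, and let ℋ be the class of all forests that are minors of graphs in 𝒢. Then ℋ is a class of forests of bounded height, 𝒢 ≡ ℋ, and 𝒢 and ℋ have the same stack depth. -/

import Mathlib

open SimpleGraph

/-- The reflexive closure of the adjacency relation of a graph. -/
def reflAdj {α : Type} (G : SimpleGraph α) (a b : α) : Prop := a = b ∨ G.Adj a b

/-- A set of vertices induces a connected subgraph of `G`. -/
def ConnSet {α : Type} (G : SimpleGraph α) (s : Set α) : Prop := (G.induce s).Connected

/-- `B` is an `H`-deconstruction of `G`: coverage and connectivity. -/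
def IsDeconstruction {α β : Type} (G : SimpleGraph α) (H : SimpleGraph β)
    (B : β → Set α) : Prop :=
  (∀ g g' : α, reflAdj G g g' →
      ∃ h h' : β, reflAdj H h h' ∧ g ∈ B h ∪ B h' ∧ g' ∈ B h ∪ B h') ∧
  (∀ g : α, ConnSet H {h | g ∈ B h})

/-- The family `B` (viewed as an `H`-indexed family of bags) has width at most `w`. -/
def DeconWidthLE {α β : Type} (H : SimpleGraph β) (B : β → Set α) (w : ℕ) : Prop :=
  ∀ h h' : β, reflAdj H h h' → (B h ∪ B h').ncard ≤ w

/-- `B` is an `H`-decomposition of `G`: each (refl-)edge inside a single bag, plus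
connectivity. -/
def IsDecomposition {α β : Type} (G : SimpleGraph α) (H : SimpleGraph β)
    (B : β → Set α) : Prop :=
  (∀ g g' : α, reflAdj G g g' → ∃ h : β, g ∈ B h ∧ g' ∈ B h) ∧
  (∀ g : α, ConnSet H {h | g ∈ B h})

/-- A finite simple graph, presented on a vertex set `Fin n`. -/
structure FinGraph where
  n : ℕ
  G : SimpleGraph (Fin n)

/-- `𝒢 ≼ ℋ` : every graph in `𝒢` has an `H`-deconstruction of width `≤ w`
for some `H ∈ ℋ`, for a uniform constant `w`. -/
def DeconLE (𝒢 ℋ : Set FinGraph) : Prop :=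
  ∃ w : ℕ, ∀ G ∈ 𝒢, ∃ H ∈ ℋ, ∃ B : Fin H.n → Set (Fin G.n),
    IsDeconstruction G.G H.G B ∧ DeconWidthLE H.G B w

/-- `𝒢 ≡ ℋ`. -/
def DeconEquiv (𝒢 ℋ : Set FinGraph) : Prop := DeconLE 𝒢 ℋ ∧ DeconLE ℋ 𝒢

/-- `𝒢 ≺ ℋ`. -/
def DeconLT (𝒢 ℋ : Set FinGraph) : Prop := DeconLE 𝒢 ℋ ∧ ¬ DeconEquiv 𝒢 ℋ

/-- `μ` is a minor map from `M` to `G`. -/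
def IsMinorMap {α β : Type} (M : SimpleGraph α) (G : SimpleGraph β)
    (μ : α → Set β) : Prop :=
  (∀ m : α, ConnSet G (μ m)) ∧
  (∀ m m' : α, m ≠ m' → Disjoint (μ m) (μ m')) ∧
  (∀ m m' : α, M.Adj m m' → ∃ g ∈ μ m, ∃ g' ∈ μ m', G.Adj g g')

/-- `M` is a minor of `G`. -/
def IsMinor (M G : FinGraph) : Prop :=
  ∃ μ : Fin M.n → Set (Fin G.n), IsMinorMap M.G G.G μ

/-- The class of all minors of graphs in `𝒢`. -/
def minorsCl (𝒢 : Set FinGraph) : Set FinGraph := {M | ∃ G ∈ 𝒢, IsMinor M G}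

/-- The (connected) graph `G`, viewed as a tree, has height at most `d`:
some rooting puts every vertex within distance `d` of the root. -/
def treeHeightLE (G : FinGraph) (d : ℕ) : Prop :=
  ∃ r : Fin G.n, ∀ v : Fin G.n, G.G.dist r v ≤ d

/-- Every connected component of `G` has height at most `d`. -/
def forestHeightLE (G : FinGraph) (d : ℕ) : Prop :=
  ∀ v : Fin G.n, ∃ r : Fin G.n, G.G.Reachable r v ∧
    ∀ u : Fin G.n, G.G.Reachable r u → G.G.dist r u ≤ d

/-- `ℒ` : the class of all finite simple graphs. -/
def classL : Set FinGraph := Set.univ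

/-- `𝒯` : the class of all finite trees. -/
def classT : Set FinGraph := {G | G.G.IsTree}

/-- `𝒫` : the class of all finite paths (on at least two vertices). -/
def classP : Set FinGraph := {G | ∃ m : ℕ, 2 ≤ m ∧ Nonempty (G.G ≃g pathGraph m)}

/-- `𝒯_d` : all finite trees of height at most `d`. -/
def classTd (d : ℕ) : Set FinGraph := {G | G.G.IsTree ∧ treeHeightLE G d}

/-- `ℱ_d` : all finite forests of height at most `d`. -/
def classFd (d : ℕ) : Set FinGraph := {G | G.G.IsAcyclic ∧ forestHeightLE G d}

/-- The complete `k`-ary tree `T_{h,k}` of height `h`, on strings over `[k]` of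
length at most `h`; each string of length `< h` is joined to its one-symbol extensions. -/
def kAryTree (h k : ℕ) : SimpleGraph {l : List (Fin k) // l.length ≤ h} :=
  SimpleGraph.fromRel (fun a b => ∃ i : Fin k, b.1 = i :: a.1)

/-- For every `k ≥ 1`, the tree `T_{h,k}` is a minor of some graph in `𝒢`. -/
def StackAll (𝒢 : Set FinGraph) (h : ℕ) : Prop :=
  ∀ k : ℕ, 1 ≤ k → ∃ G ∈ 𝒢, ∃ μ : {l : List (Fin k) // l.length ≤ h} → Set (Fin G.n),
    IsMinorMap (kAryTree h k) G.G μ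

/-- `𝒢` has stack depth (exactly) `d`. -/
def HasStackDepth (𝒢 : Set FinGraph) (d : ℕ) : Prop :=
  StackAll 𝒢 d ∧ ¬ StackAll 𝒢 (d + 1)

/-- The tree depth of `G` is at most `h`: there is a rooted forest on the vertex
set of `G` (given by a parent function whose fixed points are the roots) of height
at most `h` whose (ancestor-descendant) closure contains all edges of `G`. -/
def TreeDepthLE {α : Type} (G : SimpleGraph α) (h : ℕ) : Prop :=
  ∃ par : α → α,
    (∀ v : α, par (par^[h] v) = par^[h] v) ∧
    (∀ u v : α, G.Adj u v → (∃ k : ℕ, par^[k] u = v) ∨ (∃ k : ℕ, par^[k] v = u))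

/-- The class `𝒢` has bounded tree depth. -/
def HasBoundedTreeDepth (𝒢 : Set FinGraph) : Prop :=
  ∃ h : ℕ, ∀ G ∈ 𝒢, TreeDepthLE G.G h

/-- The class `𝒢` has bounded treewidth (via tree decompositions). -/
def HasBoundedTreewidth (𝒢 : Set FinGraph) : Prop :=
  ∃ w : ℕ, ∀ G ∈ 𝒢, ∃ H : FinGraph, H.G.IsTree ∧
    ∃ B : Fin H.n → Set (Fin G.n), IsDecomposition G.G H.G B ∧ ∀ h, (B h).ncard ≤ w + 1

/-- The class `𝒢` has bounded pathwidth (via path decompositions). -/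
def HasBoundedPathwidth (𝒢 : Set FinGraph) : Prop :=
  ∃ w : ℕ, ∀ G ∈ 𝒢, ∃ H : FinGraph, H ∈ classP ∧
    ∃ B : Fin H.n → Set (Fin G.n), IsDecomposition G.G H.G B ∧ ∀ h, (B h).ncard ≤ w + 1

/-- A finite rooted tree. -/
structure RootedFinTree where
  n : ℕ
  G : SimpleGraph (Fin n)
  isTree : G.IsTree
  root : Fin n

/-- `c` is a child of `p` in the rooted tree `T`. -/
def RootedFinTree.IsChild (T : RootedFinTree) (p c : Fin T.n) : Prop :=
  T.G.Adj p c ∧ T.G.dist T.root c = T.G.dist T.root p + 1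

/-- `a` is an ancestor of `v` in the rooted tree `T` (i.e. `a` lies on the unique
path from the root to `v`). -/
def RootedFinTree.Ancestor (T : RootedFinTree) (a v : Fin T.n) : Prop :=
  T.G.dist T.root v = T.G.dist T.root a + T.G.dist a v

/-- `(μ m)_{m}` is a nice `M`-deconstruction of `G`, for rooted trees `M`, `G`. -/
def IsNiceDecon (M G : RootedFinTree) (μ : Fin M.n → Set (Fin G.n)) : Prop :=
  IsDeconstruction G.G M.G μ ∧
  IsMinorMap M.G G.G μ ∧
  G.root ∈ μ M.root ∧
  (∀ (m m' : Fin M.n) (g g' : Fin G.n),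
    M.IsChild m m' → g ∈ μ m → g' ∈ μ m' → G.G.Adj g g' → G.IsChild g g')

/-- The node `u` of the rooted tree `T` has property `P(d,k)`. -/
def PropP (T : RootedFinTree) (k : ℕ) : ℕ → Fin T.n → Prop
  | 0, _ => True
  | d + 1, u => ∃ s : Finset (Fin T.n), s.card = k ∧
      (∀ v ∈ s, T.Ancestor u v) ∧
      (∀ v ∈ s, ∀ w ∈ s, v ≠ w → ¬ T.Ancestor v w ∧ ¬ T.Ancestor w v) ∧
      (∀ v ∈ s, PropP T k d v)


-- ===== auxiliary machinery =====
open Function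

/-- Reachability within a vertex set. -/
def ReachIn {α : Type} (G : SimpleGraph α) (s : Set α) (a b : α) : Prop :=
  ∃ w : G.Walk a b, ∀ x ∈ w.support, x ∈ s

namespace ReachIn

variable {α : Type} {G : SimpleGraph α} {s t : Set α} {a b c : α}

lemma refl (ha : a ∈ s) : ReachIn G s a a := ⟨SimpleGraph.Walk.nil, by simp [ha]⟩

lemma mem_left (h : ReachIn G s a b) : a ∈ s := by
  obtain ⟨w, hw⟩ := h; exact hw a w.start_mem_support

lemma mem_right (h : ReachIn G s a b) : b ∈ s := by
  obtain ⟨w, hw⟩ := h; exact hw b w.end_mem_support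

lemma symm (h : ReachIn G s a b) : ReachIn G s b a := by
  obtain ⟨w, hw⟩ := h; exact ⟨w.reverse, by simpa using hw⟩

lemma trans (h : ReachIn G s a b) (h' : ReachIn G s b c) : ReachIn G s a c := by
  obtain ⟨w, hw⟩ := h; obtain ⟨w', hw'⟩ := h'
  refine ⟨w.append w', ?_⟩
  intro x hx
  rcases (SimpleGraph.Walk.mem_support_append_iff _ _).1 hx with hx | hx
  · exact hw x hx
  · exact hw' x hx

lemma mono (hst : s ⊆ t) (h : ReachIn G s a b) : ReachIn G t a b := by
  obtain ⟨w, hw⟩ := h; exact ⟨w, fun x hx => hst (hw x hx)⟩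

lemma of_adj (ha : a ∈ s) (hb : b ∈ s) (hab : G.Adj a b) : ReachIn G s a b := by
  refine ⟨hab.toWalk, ?_⟩
  intro x hx
  have hx' : x = a ∨ x = b := by simpa using hx
  rcases hx' with rfl | rfl
  · exact ha
  · exact hb

end ReachIn

lemma reachIn_of_induce {α : Type} {G : SimpleGraph α} {s : Set α} {x y : s}
    (h : (G.induce s).Reachable x y) : ReachIn G s x.1 y.1 := by
  obtain ⟨w⟩ := h
  induction w with
  | nil => exact ReachIn.refl (by simp)
  | @cons u v _ huv _ ih =>
      exact (ReachIn.of_adj u.2 v.2 huv).trans ih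

lemma induce_reachable_of_reachIn {α : Type} {G : SimpleGraph α} {s : Set α} {a b : α}
    (h : ReachIn G s a b) (ha : a ∈ s) (hb : b ∈ s) :
    (G.induce s).Reachable ⟨a, ha⟩ ⟨b, hb⟩ := by
  obtain ⟨w, hw⟩ := h
  induction w with
  | nil => rfl
  | @cons u v z huv w ih =>
      have hv : v ∈ s := hw v (by simp)
      have hw' : ∀ x ∈ w.support, x ∈ s := fun x hx => hw x (by simp [hx])
      have h1 : (G.induce s).Adj ⟨u, ha⟩ ⟨v, hv⟩ := huv
      exact (h1.reachable).trans (ih hv hb hw')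

lemma connSet_iff {α : Type} {G : SimpleGraph α} {s : Set α} :
    ConnSet G s ↔ s.Nonempty ∧ ∀ a ∈ s, ∀ b ∈ s, ReachIn G s a b := by
  constructor
  · intro h
    refine ⟨?_, ?_⟩
    · obtain ⟨⟨x, hx⟩⟩ := h.nonempty; exact ⟨x, hx⟩
    · intro a ha b hb
      exact reachIn_of_induce (h.preconnected ⟨a, ha⟩ ⟨b, hb⟩)
  · rintro ⟨⟨x, hx⟩, h⟩
    haveI : Nonempty (s : Set α) := ⟨⟨x, hx⟩⟩
    refine SimpleGraph.Connected.mk ?_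
    rintro ⟨a, ha⟩ ⟨b, hb⟩
    exact induce_reachable_of_reachIn (h a ha b hb) ha hb

lemma connSet_singleton {α : Type} (G : SimpleGraph α) (a : α) : ConnSet G {a} := by
  rw [connSet_iff]
  refine ⟨⟨a, rfl⟩, ?_⟩
  rintro x rfl y rfl
  exact ReachIn.refl rfl


section IterHelpers

variable {α : Type} (par : α → α)

lemma iter_fixed_all {v : α} (hv : par v = v) : ∀ m, par^[m] v = v := by
  intro m
  induction m with
  | zero => rfl
  | succ n ih => rw [Function.iterate_succ_apply, hv, ih]

variable {H : ℕ} (hfix : ∀ v, par (par^[H] v) = par^[H] v)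

include hfix in
lemma iter_stable : ∀ (m : ℕ) (v : α), par^[m] (par^[H] v) = par^[H] v :=
  fun m v => iter_fixed_all par (hfix v) m

include hfix in
lemma iter_ge {m : ℕ} (hm : H ≤ m) (v : α) : par^[m] v = par^[H] v := by
  have : m = (m - H) + H := by omega
  rw [this, Function.iterate_add_apply]
  exact iter_stable par hfix _ v

include hfix in
lemma periodic_fixed {x : α} {p : ℕ} (hp : 1 ≤ p) (hx : par^[p] x = x) : par x = x := by
  have hall : ∀ m, par^[p * m] x = x := by
    intro m
    induction m with
    | zero => rfl
    | succ n ih => rw [Nat.mul_succ, Function.iterate_add_apply, hx, ih]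
  have hbig : H ≤ p * (H + 1) := by nlinarith
  have h1 : par^[p * (H+1)] x = x := hall _
  have h2 : par^[p * (H+1)] x = par^[H] x := iter_ge par hfix hbig x
  have hroot : x = par^[H] x := by rw [← h2, h1]
  calc par x = par (par^[H] x) := by rw [← hroot]
  _ = par^[H] x := hfix x
  _ = x := hroot.symm

include hfix in
lemma collision_root {v : α} {i j : ℕ} (hij : i < j) (hc : par^[i] v = par^[j] v) :
    par^[i] v = par^[H] v := by
  set x := par^[i] v with hxdef
  have hper : par^[j - i] x = x := by
    rw [hxdef, ← Function.iterate_add_apply]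
    have : j - i + i = j := by omega
    rw [this, ← hc]
  have hfx : par x = x := periodic_fixed par hfix (by omega) hper
  have h1 : par^[H] x = x := iter_fixed_all par hfx H
  have h2 : par^[H] x = par^[H] v := by
    rw [hxdef, ← Function.iterate_add_apply]
    have hHi : H ≤ H + i := by omega
    rw [iter_ge par hfix hHi v]
  rw [← h2, h1]

include hfix in
lemma root_adj {G : SimpleGraph α}
    (hcmp : ∀ u v, G.Adj u v → (∃ k, par^[k] u = v) ∨ (∃ k, par^[k] v = u))
    {u v : α} (huv : G.Adj u v) : par^[H] u = par^[H] v := by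
  have key : ∀ a b : α, (∃ k, par^[k] a = b) → par^[H] a = par^[H] b := by
    rintro a b ⟨k, rfl⟩
    rw [← Function.iterate_add_apply]
    have : H + k = k + H := by omega
    rw [this, Function.iterate_add_apply]
    exact (iter_stable par hfix k a).symm
  rcases hcmp u v huv with h | h
  · exact key u v h
  · exact (key v u h).symm

include hfix in
lemma root_walk {G : SimpleGraph α}
    (hcmp : ∀ u v, G.Adj u v → (∃ k, par^[k] u = v) ∨ (∃ k, par^[k] v = u))
    {u v : α} (w : G.Walk u v) : par^[H] u = par^[H] v := by
  induction w with
  | nil => rfl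
  | cons h _ ih => rw [root_adj par hfix hcmp h, ih]

lemma iter_fixed_of_measure (m : α → ℕ) (hdec : ∀ v, par v ≠ v → m (par v) < m v) :
    ∀ (N : ℕ) (v : α), m v ≤ N → par (par^[N] v) = par^[N] v := by
  intro N
  induction N with
  | zero =>
      intro v hv
      by_contra h
      simp only [Function.iterate_zero_apply] at h
      exact absurd (hdec v h) (by omega)
  | succ n ih =>
      intro v hv
      by_cases hfv : par v = v
      · rw [iter_fixed_all par hfv]; exact hfv
      · rw [Function.iterate_succ_apply]
        exact ih (par v) (by have := hdec v hfv; omega)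

end IterHelpers

lemma restrict_pars {α : Type} (G : SimpleGraph α) (par : α → α) (h : ℕ)
    (hfix : ∀ v, par (par^[h+1] v) = par^[h+1] v)
    (S : Set α) (r : α) (hroot : ∀ v ∈ S, par^[h+1] v = r) (hr : r ∉ S) :
    ∃ par' : α → α, (∀ v, par' (par'^[h] v) = par'^[h] v) ∧
      (∀ u v : α, u ∈ S → v ∈ S → u ≠ v → (∃ k, par^[k] u = v) →
        (∃ k, par'^[k] u = v)) := by
  classical
  set J : α → Set ℕ := fun v => {j | 1 ≤ j ∧ par^[j] v ∈ S} with hJ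
  set par' : α → α := fun v => if v ∈ S ∧ (J v).Nonempty then par^[sInf (J v)] v else v
    with hpar'
  have hmem_lt : ∀ v ∈ S, ∀ j ∈ J v, j ≤ h := by
    intro v hv j hj
    by_contra hjh
    have hh : par^[j] v = par^[h+1] v := iter_ge par hfix (by omega) v
    rw [hroot v hv] at hh
    exact hr (hh ▸ hj.2)
  set m : α → ℕ := fun v => ((Finset.Icc 1 h).filter (fun j => par^[j] v ∈ S)).card
    with hm
  have hdec : ∀ v, par' v ≠ v → m (par' v) < m v := by
    intro v hne'
    have hguard : v ∈ S ∧ (J v).Nonempty := by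
      by_contra hg
      rw [hpar'] at hne'
      simp only [if_neg hg] at hne'
      exact hne' rfl
    obtain ⟨hv, hne⟩ := hguard
    have hpv : par' v = par^[sInf (J v)] v := by
      rw [hpar']; simp only [if_pos (And.intro hv hne)]
    set j0 := sInf (J v) with hj0def
    have hj0 : j0 ∈ J v := Nat.sInf_mem hne
    have hj0h : j0 ≤ h := hmem_lt v hv j0 hj0
    have hiter : ∀ j : ℕ, par^[j] (par' v) = par^[j + j0] v := by
      intro j
      rw [hpv, ← Function.iterate_add_apply]
    have hsub : ∀ j ∈ (Finset.Icc 1 h).filter (fun j => par^[j] (par' v) ∈ S),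
        j + j0 ∈ ((Finset.Icc 1 h).filter (fun j => par^[j] v ∈ S)).erase j0 := by
      intro j hjmem
      simp only [Finset.mem_filter, Finset.mem_Icc] at hjmem
      have hjS : par^[j + j0] v ∈ S := by rw [← hiter]; exact hjmem.2
      have hjJ : j + j0 ∈ J v := ⟨by omega, hjS⟩
      have hjle : j + j0 ≤ h := hmem_lt v hv _ hjJ
      refine Finset.mem_erase.2 ⟨by omega, ?_⟩
      simp only [Finset.mem_filter, Finset.mem_Icc]
      exact ⟨⟨by omega, hjle⟩, hjS⟩
    have hcard : m (par' v) ≤ (((Finset.Icc 1 h).filter (fun j => par^[j] v ∈ S)).erase j0).card := by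
      apply Finset.card_le_card_of_injOn (fun j => j + j0) hsub
      intro a _ b _ hab
      have : a + j0 = b + j0 := hab
      omega
    have hj0mem : j0 ∈ (Finset.Icc 1 h).filter (fun j => par^[j] v ∈ S) := by
      simp only [Finset.mem_filter, Finset.mem_Icc]
      exact ⟨⟨hj0.1, hj0h⟩, hj0.2⟩
    have hment := Finset.card_erase_of_mem hj0mem
    have hmv : m v = ((Finset.Icc 1 h).filter (fun j => par^[j] v ∈ S)).card := rfl
    have hpos : 0 < ((Finset.Icc 1 h).filter (fun j => par^[j] v ∈ S)).card :=
      Finset.card_pos.2 ⟨j0, hj0mem⟩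
    omega
  have hmle : ∀ v, m v ≤ h := by
    intro v
    calc m v ≤ (Finset.Icc 1 h).card := Finset.card_filter_le _ _
    _ = h := by rw [Nat.card_Icc]; omega
  refine ⟨par', fun v => iter_fixed_of_measure par' m hdec h v (hmle v), ?_⟩
  have claim : ∀ k : ℕ, ∀ u, u ∈ S → ∀ v, v ∈ S → 1 ≤ k → par^[k] u = v →
      ∃ j, par'^[j] u = v := by
    intro k
    induction k using Nat.strong_induction_on with
    | _ k ih =>
      intro u hu v hv hk hkv
      have hkJ : k ∈ J u := ⟨hk, by rw [hkv]; exact hv⟩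
      have hne : (J u).Nonempty := ⟨k, hkJ⟩
      have hj0 : sInf (J u) ∈ J u := Nat.sInf_mem hne
      have hj0le : sInf (J u) ≤ k := Nat.sInf_le hkJ
      have hpu : par' u = par^[sInf (J u)] u := by
        rw [hpar']; simp only [if_pos (And.intro hu hne)]
      by_cases heq : par^[sInf (J u)] u = v
      · exact ⟨1, by rw [Function.iterate_one, hpu, heq]⟩
      · have hj0lt : sInf (J u) < k := by
          rcases lt_or_eq_of_le hj0le with h' | h'
          · exact h'
          · exact absurd (by rw [h']; exact hkv) heq
        have hrec : par^[k - sInf (J u)] (par' u) = v := by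
          rw [hpu, ← Function.iterate_add_apply]
          have heq2 : k - sInf (J u) + sInf (J u) = k := by omega
          rw [heq2, hkv]
        have hpuS : par' u ∈ S := by rw [hpu]; exact hj0.2
        have h1j : 1 ≤ sInf (J u) := hj0.1
        obtain ⟨j, hj⟩ := ih (k - sInf (J u)) (by omega) (par' u) hpuS v hv (by omega) hrec
        exact ⟨j + 1, by rw [Function.iterate_add_apply, Function.iterate_one, hj]⟩
  rintro u v hu hv huv ⟨k, hk⟩
  have hk1 : 1 ≤ k := by
    rcases Nat.eq_zero_or_pos k with rfl | h'
    · exact absurd hk huv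
    · exact h'
  exact claim k u hu v hv hk1 hk

/-- The restriction of `G` to a vertex set `S`. -/
def GRes {α : Type} (G : SimpleGraph α) (S : Set α) : SimpleGraph α where
  Adj u v := G.Adj u v ∧ u ∈ S ∧ v ∈ S
  symm := ⟨by rintro u v ⟨h1, h2, h3⟩; exact ⟨h1.symm, h3, h2⟩⟩
  loopless := ⟨fun v hv => G.irrefl hv.1⟩

@[simp] lemma GRes_adj {α : Type} (G : SimpleGraph α) (S : Set α) (u v : α) :
    (GRes G S).Adj u v ↔ G.Adj u v ∧ u ∈ S ∧ v ∈ S := Iff.rfl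

lemma reachIn_GRes {α : Type} {G : SimpleGraph α} {S s : Set α} (hsS : s ⊆ S) {a b : α}
    (h : ReachIn G s a b) : ReachIn (GRes G S) s a b := by
  obtain ⟨w, hw⟩ := h
  induction w with
  | nil => exact ReachIn.refl (hw _ (by simp))
  | @cons u v z huv w ih =>
      have hu : u ∈ s := hw u (by simp)
      have hv : v ∈ s := hw v (by simp)
      have hw' : ∀ x ∈ w.support, x ∈ s := fun x hx => hw x (by simp [hx])
      exact (ReachIn.of_adj hu hv ((GRes_adj G S u v).2 ⟨huv, hsS hu, hsS hv⟩)).trans (ih hw')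

/-- The statement of the key lemma, as a predicate on the height. -/
def KeyStmt (h : ℕ) : Prop := ∀ (α : Type) (G : SimpleGraph α) (par : α → α),
    (∀ v, par (par^[h] v) = par^[h] v) →
    (∀ u v, G.Adj u v → (∃ k, par^[k] u = v) ∨ (∃ k, par^[k] v = u)) →
    ∀ (n : ℕ) (f : ℕ → Set α),
    (∀ i, i ≤ n → (f i).Nonempty) →
    (∀ i, i ≤ n → ∀ a ∈ f i, ∀ b ∈ f i, ReachIn G (f i) a b) →
    (∀ i j, i ≤ n → j ≤ n → i ≠ j → Disjoint (f i) (f j)) →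
    (∀ i, i < n → ∃ a ∈ f i, ∃ b ∈ f (i+1), G.Adj a b) →
    n + 2 ≤ 2^(h+1)

lemma key_step {α : Type} (G : SimpleGraph α) (par : α → α) (h : ℕ)
    (hfix : ∀ v, par (par^[h+1] v) = par^[h+1] v)
    (hcmp : ∀ u v, G.Adj u v → (∃ k, par^[k] u = v) ∨ (∃ k, par^[k] v = u))
    (ih : KeyStmt h) (n : ℕ) (f : ℕ → Set α)
    (hne : ∀ i, i ≤ n → (f i).Nonempty)
    (hconn : ∀ i, i ≤ n → ∀ a ∈ f i, ∀ b ∈ f i, ReachIn G (f i) a b)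
    (hdisj : ∀ i j, i ≤ n → j ≤ n → i ≠ j → Disjoint (f i) (f j))
    (hadj : ∀ i, i < n → ∃ a ∈ f i, ∃ b ∈ f (i+1), G.Adj a b)
    (r : α) (hroot : ∀ i, i ≤ n → ∀ x ∈ f i, par^[h+1] x = r)
    (hr : ∀ i, i ≤ n → r ∉ f i) :
    n + 2 ≤ 2^(h+1) := by
  set S : Set α := {x | ∃ i, i ≤ n ∧ x ∈ f i} with hS
  have hfS : ∀ i, i ≤ n → f i ⊆ S := fun i hi x hx => ⟨i, hi, hx⟩
  have hrootS : ∀ v ∈ S, par^[h+1] v = r := by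
    rintro v ⟨i, hi, hv⟩; exact hroot i hi v hv
  have hrS : r ∉ S := by
    rintro ⟨i, hi, hri⟩; exact hr i hi hri
  obtain ⟨par', hfix', hcmp'⟩ := restrict_pars G par h hfix S r hrootS hrS
  refine ih α (GRes G S) par' hfix' ?_ n f hne ?_ hdisj ?_
  · intro u v huv'
    rw [GRes_adj] at huv'
    obtain ⟨huv, hu, hv⟩ := huv'
    rcases hcmp u v huv with hcase | hcase
    · exact Or.inl (hcmp' u v hu hv (G.ne_of_adj huv) hcase)
    · exact Or.inr (hcmp' v u hv hu (G.ne_of_adj huv.symm) hcase)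
  · intro i hi a ha b hb
    exact reachIn_GRes (hfS i hi) (hconn i hi a ha b hb)
  · intro i hi
    obtain ⟨a, ha, b, hb, hab⟩ := hadj i hi
    exact ⟨a, ha, b, hb, (GRes_adj G S a b).2 ⟨hab, hfS i (by omega) ha, hfS (i+1) (by omega) hb⟩⟩

lemma key_lemma (h : ℕ) : KeyStmt h := by
  induction h with
  | zero =>
    intro α G par hfix hcmp n f hne hconn hdisj hadj
    have hnoedge : ∀ u v : α, ¬ G.Adj u v := by
      intro u v huv
      have h0 : ∀ (k : ℕ) (x : α), par^[k] x = x := by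
        intro k x
        exact iter_fixed_all par (by simpa using hfix x) k
      rcases hcmp u v huv with ⟨k, hk⟩ | ⟨k, hk⟩
      · exact G.ne_of_adj huv (by rw [← hk, h0])
      · exact G.ne_of_adj huv.symm (by rw [← hk, h0])
    by_contra hn
    obtain ⟨a, _, b, _, hab⟩ := hadj 0 (by omega)
    exact hnoedge a b hab
  | succ h ih =>
    intro α G par hfix hcmp n f hne hconn hdisj hadj
    obtain ⟨a0, ha0⟩ := hne 0 (by omega)
    set r := par^[h+1] a0 with hrdef
    have hU : ∀ i, i ≤ n → ∀ x ∈ f i, par^[h+1] x = r := by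
      intro i
      induction i with
      | zero =>
        intro _ x hx
        obtain ⟨w, _⟩ := hconn 0 (by omega) a0 ha0 x hx
        exact (root_walk par hfix hcmp w).symm
      | succ i ihi =>
        intro hi x hx
        obtain ⟨a, ha, b, hb, hab⟩ := hadj i (by omega)
        have hra : par^[h+1] a = r := ihi (by omega) a ha
        have hrb : par^[h+1] b = r := by rw [← root_adj par hfix hcmp hab]; exact hra
        obtain ⟨w, _⟩ := hconn (i+1) hi b hb x hx
        rw [← root_walk par hfix hcmp w]; exact hrb
    have h2p : (2:ℕ)^(h+1+1) = 2 * 2^(h+1) := by ring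
    have h2pos : 1 ≤ (2:ℕ)^(h+1) := Nat.one_le_two_pow
    by_cases hrU : ∃ j, j ≤ n ∧ r ∈ f j
    · obtain ⟨j, hjn, hrj⟩ := hrU
      -- left bound
      have hleft : j + 1 ≤ 2^(h+1) := by
        rcases Nat.eq_zero_or_pos j with rfl | hj0
        · omega
        · have := key_step G par h hfix hcmp ih (j-1) f
            (fun i hi => hne i (by omega))
            (fun i hi => hconn i (by omega))
            (fun i k hi hk hik => hdisj i k (by omega) (by omega) hik)
            (fun i hi => hadj i (by omega))
            r (fun i hi => hU i (by omega))
            (fun i hi hri => (Set.disjoint_left.1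
              (hdisj i j (by omega) hjn (by omega))) hri hrj)
          omega
      have hright : (n - j) + 1 ≤ 2^(h+1) := by
        rcases Nat.eq_or_lt_of_le hjn with rfl | hjlt
        · omega
        · have := key_step G par h hfix hcmp ih (n - (j+1)) (fun i => f (j+1+i))
            (fun i hi => hne (j+1+i) (by omega))
            (fun i hi => hconn (j+1+i) (by omega))
            (fun i k hi hk hik => hdisj (j+1+i) (j+1+k) (by omega) (by omega) (by omega))
            (fun i hi => by
              have := hadj (j+1+i) (by omega)
              have harith : j+1+i+1 = j+1+(i+1) := by omega
              rw [harith] at this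
              exact this)
            r (fun i hi => hU (j+1+i) (by omega))
            (fun i hi hri => (Set.disjoint_left.1
              (hdisj (j+1+i) j (by omega) hjn (by omega))) hri hrj)
          omega
      omega
    · push_neg at hrU
      have := key_step G par h hfix hcmp ih n f hne hconn hdisj hadj r hU hrU
      omega
section DFS
variable {V : Type} [DecidableEq V] (G : SimpleGraph V)

lemma reachIn_component {s : Set V} {v : V} :
    ∀ {a b : V} (w : G.Walk a b), (∀ y ∈ w.support, y ∈ s) →
      ReachIn G s v a → ReachIn G {y | ReachIn G s v y} a b := by
  intro a b w
  induction w with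
  | nil => intro _ hva; exact ReachIn.refl hva
  | @cons a c b h w' ih =>
      intro hw hva
      have ha : a ∈ s := hw a (by simp)
      have hc : c ∈ s := hw c (by simp)
      have hw' : ∀ y ∈ w'.support, y ∈ s := fun y hy => hw y (by simp [hy])
      have hvc : ReachIn G s v c := hva.trans (ReachIn.of_adj ha hc h)
      exact (ReachIn.of_adj (s := {y | ReachIn G s v y}) hva hvc h).trans (ih hw' hvc)

lemma dfs_component :
    ∀ (N : ℕ) (s : Finset V) (r : V), s.card ≤ N → r ∈ s →
    (∀ v ∈ s, ReachIn G (↑s) r v) →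
    ∃ q : V → V,
      (∀ v, v ∉ s → q v = v) ∧
      (q r = r) ∧
      (∀ v, v ∈ s → v ≠ r → q v ∈ s ∧ G.Adj v (q v)) ∧
      (∀ u, u ∈ s → ∀ v, v ∈ s → G.Adj u v →
        (∃ k, q^[k] u = v) ∨ (∃ k, q^[k] v = u)) ∧
      (∀ v, v ∈ s → ∃ k, q^[k] v = r) := by
  intro N
  induction N with
  | zero =>
      intro s r hcard hr _
      rw [Nat.le_zero, Finset.card_eq_zero] at hcard
      subst hcard
      simp at hr
  | succ N ihN =>
    intro s r hcard hr hreach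
    classical
    set s' : Finset V := s.erase r with hs'def
    have hs'sub : s' ⊆ s := Finset.erase_subset r s
    have hmem_s' : ∀ v, v ∈ s' ↔ v ∈ s ∧ v ≠ r := by
      intro v; rw [hs'def, Finset.mem_erase]; tauto
    -- attach: every vertex of s' has, within s', a reachable neighbour of r
    have hattach : ∀ v ∈ s', ∃ x, x ∈ s' ∧ G.Adj r x ∧ ReachIn G (↑s') x v := by
      intro v hv
      have hvs : v ∈ s := hs'sub hv
      have hvr : v ≠ r := ((hmem_s' v).1 hv).2
      obtain ⟨w, hw⟩ := hreach v hvs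
      have hbp : w.bypass.IsPath := SimpleGraph.Walk.bypass_isPath w
      have hbs : ∀ y ∈ w.bypass.support, y ∈ (↑s : Set V) :=
        fun y hy => hw y (SimpleGraph.Walk.support_bypass_subset w hy)
      set p := w.bypass with hpdef
      clear_value p
      cases p with
      | nil => exact absurd rfl hvr.symm
      | @cons _ x _ h p' =>
          rw [SimpleGraph.Walk.cons_isPath_iff] at hbp
          have hp's : ∀ y ∈ p'.support, y ∈ (↑s' : Set V) := by
            intro y hy
            have hys : y ∈ s := hbs y (by simp [hy])
            have hyr : y ≠ r := fun hyr => hbp.2 (hyr ▸ hy)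
            exact (hmem_s' y).2 ⟨hys, hyr⟩
          have hxs' : x ∈ s' := hp's x p'.start_mem_support
          exact ⟨x, hxs', h, ⟨p', hp's⟩⟩
    -- components of s'
    set C : V → Finset V := fun v => s'.filter (fun u => ReachIn G (↑s') v u) with hCdef
    have hmemC : ∀ v u, u ∈ C v ↔ u ∈ s' ∧ ReachIn G (↑s') v u := by
      intro v u; rw [hCdef]; simp [Finset.mem_filter]
    have hCmem : ∀ v ∈ s', v ∈ C v := by
      intro v hv; rw [hmemC]; exact ⟨hv, ReachIn.refl hv⟩
    have hCsub : ∀ v, (C v : Set V) ⊆ (↑s' : Set V) := by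
      intro v u hu; exact ((hmemC v u).1 hu).1
    have hCeq : ∀ v ∈ s', ∀ u, u ∈ C v → C u = C v := by
      intro v hv u hu
      rw [hmemC] at hu
      ext w
      rw [hmemC, hmemC]
      constructor
      · rintro ⟨hw, hr2⟩; exact ⟨hw, hu.2.trans hr2⟩
      · rintro ⟨hw, hr2⟩; exact ⟨hw, hu.2.symm.trans hr2⟩
    have hCreach : ∀ v ∈ s', ∀ u, u ∈ C v → ReachIn G (↑(C v)) v u := by
      intro v hv u hu
      rw [hmemC] at hu
      obtain ⟨w, hw⟩ := hu.2
      have := reachIn_component G w hw (ReachIn.refl hv)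
      refine this.mono ?_
      intro y hy
      rw [Set.mem_setOf_eq] at hy
      have : y ∈ C v := (hmemC v y).2 ⟨hy.mem_right, hy⟩
      exact this
    -- guard
    set Guard : Finset V → Prop := fun c => c.card ≤ N ∧
      ∃ x, x ∈ c ∧ G.Adj r x ∧ ∀ u ∈ c, ReachIn G (↑c) x u with hGuarddef
    have hguard : ∀ v ∈ s', Guard (C v) := by
      intro v hv
      constructor
      · have h1 : (C v).card ≤ s'.card := Finset.card_le_card (fun u hu => hCsub v hu)
        have h2 : s'.card = s.card - 1 := by rw [hs'def, Finset.card_erase_of_mem hr]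
        have h3 : 1 ≤ s.card := Finset.card_pos.2 ⟨r, hr⟩
        omega
      · obtain ⟨x, hx, hadjx, hrx⟩ := hattach v hv
        have hxC : x ∈ C v := (hmemC v x).2 ⟨hx, hrx.symm⟩
        refine ⟨x, hxC, hadjx, ?_⟩
        intro u hu
        exact (hCreach v hv x hxC).symm.trans (hCreach v hv u hu)
    -- choose, for every component, a dfs function via ihN
    have hQ : ∀ c : Finset V, ∃ p : (V → V) × V,
        Guard c → p.2 ∈ c ∧ G.Adj r p.2 ∧
          (∀ v, v ∉ c → p.1 v = v) ∧ (p.1 p.2 = p.2) ∧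
          (∀ v, v ∈ c → v ≠ p.2 → p.1 v ∈ c ∧ G.Adj v (p.1 v)) ∧
          (∀ u, u ∈ c → ∀ v, v ∈ c → G.Adj u v →
            (∃ k, (p.1)^[k] u = v) ∨ (∃ k, (p.1)^[k] v = u)) ∧
          (∀ v, v ∈ c → ∃ k, (p.1)^[k] v = p.2) := by
      intro c
      by_cases hg : Guard c
      · obtain ⟨hcard2, x, hx, hadjx, hreachx⟩ := hg
        obtain ⟨q, hq1, hq2, hq3, hq4, hq5⟩ := ihN c x hcard2 hx hreachx
        refine ⟨(q, x), fun _ => ⟨hx, hadjx, ?_, hq2, ?_, ?_, ?_⟩⟩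
        · intro v hv; exact hq1 v (by simpa using hv)
        · intro v hv hvx; exact hq3 v hv hvx
        · intro u hu v hv; exact hq4 u hu v hv
        · intro v hv; exact hq5 v hv
      · exact ⟨(id, r), fun h => absurd h hg⟩
    choose P hP using hQ
    -- the global function
    set q : V → V := fun v => if v ∈ s' then (if v = (P (C v)).2 then r else (P (C v)).1 v)
      else v with hqdef
    have hq_out : ∀ v, v ∉ s' → q v = v := by
      intro v hv; rw [hqdef]; simp only [if_neg hv]
    have hq_root : ∀ v ∈ s', v = (P (C v)).2 → q v = r := by
      intro v hv hroot; rw [hqdef]; simp only [if_pos hv, if_pos hroot]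
    have hq_in : ∀ v ∈ s', v ≠ (P (C v)).2 → q v = (P (C v)).1 v := by
      intro v hv hroot; rw [hqdef]; simp only [if_pos hv, if_neg hroot]
    -- agreement along chains
    have hagree : ∀ v, v ∈ s' → ∀ k, (∀ i, i < k → (P (C v)).1^[i] v ≠ (P (C v)).2) →
        q^[k] v = (P (C v)).1^[k] v ∧ (P (C v)).1^[k] v ∈ C v := by
      intro v hv k
      induction k with
      | zero => intro _; exact ⟨rfl, hCmem v hv⟩
      | succ k ihk =>
          intro hno
          obtain ⟨hqk, hmemk⟩ := ihk (fun i hi => hno i (by omega))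
          set u := (P (C v)).1^[k] v with hudef
          have hune : u ≠ (P (C v)).2 := hno k (by omega)
          have hu' : u ∈ s' := hCsub v hmemk
          have hCu : C u = C v := hCeq v hv u hmemk
          have hqu : q u = (P (C v)).1 u := by
            rw [hq_in u hu' (by rw [hCu]; exact hune), hCu]
          have hspec := (hP (C v) (hguard v hv)).2.2.2.2.1 u hmemk hune
          constructor
          · rw [Function.iterate_succ_apply' q, Function.iterate_succ_apply', ← hudef,
              hqk, hqu]
          · rw [Function.iterate_succ_apply', ← hudef]; exact hspec.1
    -- for each v in s', least time its component chain hits the component root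
    have hchain : ∀ v, v ∈ s' → (∃ k, q^[k] v = r) ∧
        (∀ w, w ∈ C v → (∃ j, (P (C v)).1^[j] v = w) → ∃ j, q^[j] v = w) := by
      intro v hv
      have hspec := hP (C v) (hguard v hv)
      set x := (P (C v)).2 with hxdef
      have hKne : ∃ k, (P (C v)).1^[k] v = x := hspec.2.2.2.2.2.2 v (hCmem v hv)
      set k0 := Nat.find hKne with hk0def
      have hk0 : (P (C v)).1^[k0] v = x := Nat.find_spec hKne
      have hk0min : ∀ i, i < k0 → (P (C v)).1^[i] v ≠ x := fun i hi => Nat.find_min hKne hi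
      have hag := hagree v hv k0 hk0min
      have hqk0 : q^[k0] v = x := by rw [hag.1, hk0]
      have hxs' : x ∈ s' := hCsub v hspec.1
      have hCx : C x = C v := hCeq v hv x hspec.1
      have hqx : q x = r := hq_root x hxs' (by rw [hCx])
      constructor
      · refine ⟨k0 + 1, ?_⟩
        rw [Function.iterate_succ_apply', hqk0, hqx]
      · intro w hw ⟨j, hj⟩
        by_cases hwx : w = x
        · exact ⟨k0, by rw [hqk0, hwx]⟩
        · have hjlt : j < k0 := by
            by_contra hjge
            have hfix : (P (C v)).1^[j] v = x := by
              have : j = (j - k0) + k0 := by omega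
              rw [this, Function.iterate_add_apply, hk0,
                iter_fixed_all _ hspec.2.2.2.1 (j - k0)]
            exact hwx (by rw [← hj, hfix])
          have hag2 := hagree v hv j (fun i hi => hk0min i (by omega))
          exact ⟨j, by rw [hag2.1, hj]⟩
    refine ⟨q, ?_, ?_, ?_, ?_, ?_⟩
    · intro v hv
      exact hq_out v (fun hv' => hv (hs'sub hv'))
    · exact hq_out r (by simp [hs'def])
    · intro v hvs hvr
      have hv : v ∈ s' := (hmem_s' v).2 ⟨hvs, hvr⟩
      by_cases hroot : v = (P (C v)).2
      · rw [hq_root v hv hroot]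
        refine ⟨hr, ?_⟩
        have := (hP (C v) (hguard v hv)).2.1
        rw [← hroot] at this
        exact this.symm
      · rw [hq_in v hv hroot]
        have hspec := (hP (C v) (hguard v hv)).2.2.2.2.1 v (hCmem v hv) hroot
        exact ⟨hs'sub (hCsub v hspec.1), hspec.2⟩
    · intro u hus v hvs hadj
      by_cases hur : u = r
      · subst hur
        have hv : v ∈ s' := (hmem_s' v).2 ⟨hvs, (G.ne_of_adj hadj.symm)⟩
        exact Or.inr ((hchain v hv).1)
      · by_cases hvr : v = r
        · subst hvr
          have hu : u ∈ s' := (hmem_s' u).2 ⟨hus, hur⟩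
          exact Or.inl ((hchain u hu).1)
        · have hu : u ∈ s' := (hmem_s' u).2 ⟨hus, hur⟩
          have hv : v ∈ s' := (hmem_s' v).2 ⟨hvs, hvr⟩
          have hvCu : v ∈ C u := (hmemC u v).2 ⟨hv, ReachIn.of_adj hu hv hadj⟩
          have hCvu : C v = C u := hCeq u hu v hvCu
          have huCu : u ∈ C u := hCmem u hu
          have huCv : u ∈ C v := by rw [hCvu]; exact huCu
          rcases (hP (C u) (hguard u hu)).2.2.2.2.2.1 u huCu v hvCu hadj with ⟨k, hk⟩ | ⟨k, hk⟩
          · exact Or.inl ((hchain u hu).2 v hvCu ⟨k, hk⟩)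
          · refine Or.inr ((hchain v hv).2 u huCv ⟨k, ?_⟩)
            rw [hCvu]
            exact hk
    · intro v hvs
      by_cases hvr : v = r
      · exact ⟨0, hvr⟩
      · exact (hchain v ((hmem_s' v).2 ⟨hvs, hvr⟩)).1
end DFS
lemma iter_agree {α : Type} {q q' : α → α} {T : Set α} (hag : ∀ v ∈ T, q v = q' v)
    (hmaps : ∀ v ∈ T, q' v ∈ T) :
    ∀ k, ∀ v ∈ T, q^[k] v = q'^[k] v ∧ q'^[k] v ∈ T := by
  intro k
  induction k with
  | zero => intro v hv; exact ⟨rfl, hv⟩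
  | succ k ih =>
      intro v hv
      obtain ⟨h1, h2⟩ := ih v hv
      constructor
      · rw [Function.iterate_succ_apply', Function.iterate_succ_apply', h1, hag _ h2]
      · rw [Function.iterate_succ_apply']
        exact hmaps _ h2

lemma periodic_fixed_of_roots {α : Type} (q : α → α)
    (hroots : ∀ v, ∃ ρ, q ρ = ρ ∧ ∃ k, q^[k] v = ρ) :
    ∀ v p, 1 ≤ p → q^[p] v = v → q v = v := by
  intro v p hp hper
  obtain ⟨ρ, hρ, k, hk⟩ := hroots v
  have hall : ∀ m, q^[p * m] v = v := by
    intro m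
    induction m with
    | zero => rfl
    | succ m ih => rw [Nat.mul_succ, Function.iterate_add_apply, hper, ih]
  have hvρ : v = ρ := by
    have h1 : q^[p * k] v = v := hall k
    have hkle : k ≤ p * k := Nat.le_mul_of_pos_left k hp
    have h2 : p * k = (p * k - k) + k := by omega
    have h3 : q^[p * k] v = ρ := by
      rw [h2, Function.iterate_add_apply, hk, iter_fixed_all q hρ]
    rw [← h1, h3]
  rw [hvρ]; exact hρ

lemma dfs_forest {V : Type} [DecidableEq V] (G : SimpleGraph V) :
    ∀ (N : ℕ) (s : Finset V), s.card ≤ N →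
    ∃ q : V → V,
      (∀ v, v ∉ s → q v = v) ∧
      (∀ v ∈ s, q v ∈ s ∧ (q v = v ∨ G.Adj v (q v))) ∧
      (∀ u ∈ s, ∀ v ∈ s, G.Adj u v →
        (∃ k, q^[k] u = v) ∨ (∃ k, q^[k] v = u)) ∧
      (∀ v ∈ s, ∃ ρ, q ρ = ρ ∧ ∃ k, q^[k] v = ρ) := by
  intro N
  induction N with
  | zero =>
      intro s hcard
      rw [Nat.le_zero, Finset.card_eq_zero] at hcard
      subst hcard
      exact ⟨id, fun v _ => rfl, by simp, by simp, by simp⟩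
  | succ N ihN =>
    intro s hcard
    classical
    rcases Finset.eq_empty_or_nonempty s with rfl | ⟨r, hr⟩
    · exact ⟨id, fun v _ => rfl, by simp, by simp, by simp⟩
    set C : Finset V := s.filter (fun u => ReachIn G (↑s) r u) with hCdef
    have hmemC : ∀ u, u ∈ C ↔ u ∈ s ∧ ReachIn G (↑s) r u := by
      intro u; rw [hCdef]; simp [Finset.mem_filter]
    have hrC : r ∈ C := (hmemC r).2 ⟨hr, ReachIn.refl hr⟩
    have hCsub : C ⊆ s := fun u hu => ((hmemC u).1 hu).1
    have hCreach : ∀ v ∈ C, ReachIn G (↑C) r v := by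
      intro v hv
      obtain ⟨w, hw⟩ := ((hmemC v).1 hv).2
      refine (reachIn_component G w hw (ReachIn.refl hr)).mono ?_
      intro y hy
      rw [Set.mem_setOf_eq] at hy
      exact (hmemC y).2 ⟨hy.mem_right, hy⟩
    have hCclosed : ∀ u ∈ C, ∀ v ∈ s, G.Adj u v → v ∈ C := by
      intro u hu v hv hadj
      exact (hmemC v).2 ⟨hv, ((hmemC u).1 hu).2.trans
        (ReachIn.of_adj (hCsub hu) hv hadj)⟩
    obtain ⟨qA, hA1, hA2, hA3, hA4, hA5⟩ :=
      dfs_component G C.card C r le_rfl hrC hCreach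
    have hsC : (s \ C).card ≤ N := by
      have h1 : (s \ C).card = s.card - C.card := Finset.card_sdiff_of_subset hCsub
      have h2 : 1 ≤ C.card := Finset.card_pos.2 ⟨r, hrC⟩
      omega
    obtain ⟨qB, hB1, hB2, hB3, hB4⟩ := ihN (s \ C) hsC
    set q : V → V := fun v => if v ∈ C then qA v else qB v with hqdef
    have hqA : ∀ v ∈ C, q v = qA v := by
      intro v hv; rw [hqdef]; simp only [if_pos hv]
    have hqB : ∀ v, v ∉ C → q v = qB v := by
      intro v hv; rw [hqdef]; simp only [if_neg hv]
    have hAmaps : ∀ v : V, v ∈ (↑C : Set V) → qA v ∈ (↑C : Set V) := by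
      intro v hv
      by_cases hvr : v = r
      · subst hvr; rw [hA2]; exact hrC
      · exact (hA3 v hv hvr).1
    have hBmaps : ∀ v : V, v ∈ (↑(s \ C) : Set V) → qB v ∈ (↑(s \ C) : Set V) := by
      intro v hv
      rcases (hB2 v hv).2 with h | _
      · rw [h]; exact hv
      · exact (hB2 v hv).1
    have hagA := iter_agree (q := q) (q' := qA) (T := (↑C : Set V)) (fun v hv => hqA v hv) hAmaps
    have hagB := iter_agree (q := q) (q' := qB) (T := (↑(s \ C) : Set V))
      (fun v hv => hqB v (by simp only [Finset.coe_sdiff, Set.mem_diff] at hv; exact fun h => hv.2 (by exact_mod_cast h))) hBmaps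
    refine ⟨q, ?_, ?_, ?_, ?_⟩
    · intro v hv
      have hvC : v ∉ C := fun h => hv (hCsub h)
      rw [hqB v hvC]
      exact hB1 v (by simp [hv])
    · intro v hv
      by_cases hvC : v ∈ C
      · rw [hqA v hvC]
        by_cases hvr : v = r
        · subst hvr; rw [hA2]; exact ⟨hv, Or.inl rfl⟩
        · exact ⟨hCsub (hA3 v hvC hvr).1, Or.inr (hA3 v hvC hvr).2⟩
      · rw [hqB v hvC]
        have hvsC : v ∈ s \ C := Finset.mem_sdiff.2 ⟨hv, hvC⟩
        exact ⟨(Finset.mem_sdiff.1 ((hB2 v hvsC).1)).1, (hB2 v hvsC).2⟩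
    · intro u hu v hv hadj
      by_cases huC : u ∈ C
      · have hvC : v ∈ C := hCclosed u huC v hv hadj
        rcases hA4 u huC v hvC hadj with ⟨k, hk⟩ | ⟨k, hk⟩
        · exact Or.inl ⟨k, by rw [(hagA k u huC).1, hk]⟩
        · exact Or.inr ⟨k, by rw [(hagA k v hvC).1, hk]⟩
      · have hvC : v ∉ C := fun hvC => huC (hCclosed v hvC u hu hadj.symm)
        have hu' : u ∈ s \ C := Finset.mem_sdiff.2 ⟨hu, huC⟩
        have hv' : v ∈ s \ C := Finset.mem_sdiff.2 ⟨hv, hvC⟩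
        rcases hB3 u hu' v hv' hadj with ⟨k, hk⟩ | ⟨k, hk⟩
        · exact Or.inl ⟨k, by rw [(hagB k u hu').1, hk]⟩
        · exact Or.inr ⟨k, by rw [(hagB k v hv').1, hk]⟩
    · intro v hv
      by_cases hvC : v ∈ C
      · refine ⟨r, by rw [hqA r hrC]; exact hA2, ?_⟩
        obtain ⟨k, hk⟩ := hA5 v hvC
        exact ⟨k, by rw [(hagA k v hvC).1, hk]⟩
      · have hv' : v ∈ s \ C := Finset.mem_sdiff.2 ⟨hv, hvC⟩
        obtain ⟨ρ, hρ, k, hk⟩ := hB4 v hv'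
        have hρ' : ρ ∈ (↑(s \ C) : Set V) := by
          have := (hagB k v hv').2
          rw [hk] at this
          exact this
        have hρC : ρ ∉ C := by
          simp only [Finset.coe_sdiff, Set.mem_diff] at hρ'
          exact fun h => hρ'.2 (by exact_mod_cast h)
        refine ⟨ρ, by rw [hqB ρ hρC]; exact hρ, k, by rw [(hagB k v hv').1, hk]⟩
lemma walk_loop_isPath_nil {α : Type} {G : SimpleGraph α} {v : α} (p : G.Walk v v)
    (hp : p.IsPath) : p = SimpleGraph.Walk.nil := by
  cases p with
  | nil => rfl
  | cons h q =>
      exfalso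
      rw [SimpleGraph.Walk.cons_isPath_iff] at hp
      exact hp.2 q.end_mem_support

lemma acyclic_of_parent {α : Type} {G : SimpleGraph α} (p : α → α) (rk : α → ℕ)
    (hgrad : ∀ u v, G.Adj u v → (u = p v ∧ rk u < rk v) ∨ (v = p u ∧ rk v < rk u)) :
    G.IsAcyclic := by
  intro v c hc
  classical
  have hne : c.support.toFinset.Nonempty := ⟨v, by simp⟩
  obtain ⟨m, hm, hmax⟩ := Finset.exists_max_image c.support.toFinset rk hne
  have hmsup : m ∈ c.support := by simpa using hm
  have hc' : (c.rotate m hmsup).IsCycle := hc.rotate hmsup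
  have hsupp : ∀ x ∈ (c.rotate m hmsup).support, rk x ≤ rk m := by
    intro x hx
    have hrot := SimpleGraph.Walk.support_rotate c m hmsup
    have hx' : x ∈ c.support := by
      rcases (SimpleGraph.Walk.mem_support_iff _).1 hx with rfl | hx2
      · exact hmsup
      · have : x ∈ c.support.tail := hrot.mem_iff.1 hx2
        exact List.mem_of_mem_tail this
    exact hmax x (by simpa using hx')
  cases hE : c.rotate m hmsup with
  | nil =>
      have h3 := hc'.three_le_length
      rw [hE] at h3
      simp at h3
  | @cons _ u _ h q =>
      rw [hE] at hc' hsupp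
      have h3 := hc'.three_le_length
      have hu : u = p m := by
        rcases hgrad m u h with ⟨_, hlt⟩ | ⟨heq, _⟩
        · exfalso
          have : rk u ≤ rk m := hsupp u (by simp)
          omega
        · exact heq
      have hmu : m ≠ u := G.ne_of_adj h
      obtain ⟨w, h2, q2, hq⟩ := SimpleGraph.Walk.exists_eq_cons_of_ne hmu q.reverse
      have hwsup : w ∈ q.support := by
        have : w ∈ q.reverse.support := by rw [hq]; simp
        rwa [SimpleGraph.Walk.support_reverse, List.mem_reverse] at this
      have hw : w = p m := by
        rcases hgrad m w h2 with ⟨_, hlt⟩ | ⟨heq, _⟩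
        · exfalso
          have : rk w ≤ rk m := hsupp w (by simp [hwsup])
          omega
        · exact heq
      have hwu : w = u := by rw [hw, ← hu]
      subst hwu
      have hqpath : q.IsPath := ((SimpleGraph.Walk.cons_isCycle_iff q h).1 hc').1
      have hqrev : q.reverse.IsPath := hqpath.reverse
      rw [hq, SimpleGraph.Walk.cons_isPath_iff] at hqrev
      have hq2nil : q2 = SimpleGraph.Walk.nil := walk_loop_isPath_nil q2 hqrev.1
      have hlen : q.length = 1 := by
        have : q.reverse.length = 1 := by rw [hq, hq2nil]; simp
        rwa [SimpleGraph.Walk.length_reverse] at this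
      rw [SimpleGraph.Walk.length_cons, hlen] at h3
      omega


-- ===== more aux =====

lemma getVert_mem_support' {α : Type} {G : SimpleGraph α} {u v : α} (p : G.Walk u v)
    {i : ℕ} (hi : i ≤ p.length) : p.getVert i ∈ p.support :=
  SimpleGraph.Walk.mem_support_iff_exists_getVert.2 ⟨i, rfl, hi⟩

lemma isPath_getVert_inj {α : Type} {G : SimpleGraph α} {u v : α} (p : G.Walk u v)
    (hp : p.IsPath) : ∀ i j, i ≤ p.length → j ≤ p.length →
      p.getVert i = p.getVert j → i = j := by
  induction p with
  | nil => intro i j hi hj _; simp at hi hj; omega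
  | @cons a x b h q ih =>
      rw [SimpleGraph.Walk.cons_isPath_iff] at hp
      intro i j hi hj hij
      rw [SimpleGraph.Walk.length_cons] at hi hj
      match i, j with
      | 0, 0 => rfl
      | 0, j + 1 =>
          exfalso
          rw [SimpleGraph.Walk.getVert_zero, SimpleGraph.Walk.getVert_cons_succ] at hij
          exact hp.2 (hij ▸ getVert_mem_support' q (by omega))
      | i + 1, 0 =>
          exfalso
          rw [SimpleGraph.Walk.getVert_zero, SimpleGraph.Walk.getVert_cons_succ] at hij
          exact hp.2 (hij ▸ getVert_mem_support' q (by omega))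
      | i + 1, j + 1 =>
          rw [SimpleGraph.Walk.getVert_cons_succ, SimpleGraph.Walk.getVert_cons_succ] at hij
          have := ih hp.1 i j (by omega) (by omega) hij
          omega

/-- A minor map yields a deconstruction of the minor over the host graph, of width 2. -/
lemma minor_decon {α β : Type} {M : SimpleGraph α} {G : SimpleGraph β} {μ : α → Set β}
    (hμ : IsMinorMap M G μ) :
    ∃ B : β → Set α, IsDeconstruction M G B ∧ DeconWidthLE G B 2 := by
  obtain ⟨hconn, hdisj, hedge⟩ := hμ
  refine ⟨fun g => {m | g ∈ μ m}, ⟨?_, ?_⟩, ?_⟩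
  · rintro m m' (rfl | hadj)
    · obtain ⟨⟨g, hg⟩, -⟩ := connSet_iff.1 (hconn m)
      exact ⟨g, g, Or.inl rfl, Or.inl hg, Or.inl hg⟩
    · obtain ⟨g, hg, g', hg', hadj'⟩ := hedge m m' hadj
      exact ⟨g, g', Or.inr hadj', Or.inl hg, Or.inr hg'⟩
  · intro m
    have : {g | m ∈ {m' | g ∈ μ m'}} = μ m := by ext g; simp
    rw [this]
    exact hconn m
  · intro g g' _
    have hsub : ∀ (x : β), ({m | x ∈ μ m} : Set α).ncard ≤ 1 := by
      intro x
      have hss : ({m | x ∈ μ m} : Set α).Subsingleton := by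
        intro m1 h1 m2 h2
        by_contra hne
        exact Set.disjoint_left.1 (hdisj m1 m2 hne) h1 h2
      rcases hss.eq_empty_or_singleton with h | ⟨a, h⟩
      · rw [h]; simp
      · rw [h]; simp
    calc ({m | g ∈ μ m} ∪ {m | g' ∈ μ m} : Set α).ncard
        ≤ ({m | g ∈ μ m} : Set α).ncard + ({m | g' ∈ μ m} : Set α).ncard :=
          Set.ncard_union_le _ _
      _ ≤ 2 := by have := hsub g; have := hsub g'; omega

/-- Minor maps compose. -/
lemma minor_comp {α β γ : Type} {M : SimpleGraph α} {H : SimpleGraph β} {G : SimpleGraph γ}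
    {μ : α → Set β} {ν : β → Set γ} (hμ : IsMinorMap M H μ) (hν : IsMinorMap H G ν) :
    IsMinorMap M G (fun m => ⋃ x ∈ μ m, ν x) := by
  obtain ⟨hconn1, hdisj1, hedge1⟩ := hμ
  obtain ⟨hconn2, hdisj2, hedge2⟩ := hν
  have hsubν : ∀ (m : α) (x : β), x ∈ μ m → ν x ⊆ ⋃ y ∈ μ m, ν y := by
    intro m x hx g hg
    exact Set.mem_biUnion hx hg
  refine ⟨?_, ?_, ?_⟩
  · intro m
    rw [connSet_iff]
    have hνreach : ∀ x, x ∈ μ m → ∀ a ∈ ν x, ∀ b ∈ ν x,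
        ReachIn G (⋃ y ∈ μ m, ν y) a b := by
      intro x hx a ha b hb
      exact ((connSet_iff.1 (hconn2 x)).2 a ha b hb).mono (hsubν m x hx)
    constructor
    · obtain ⟨⟨x, hx⟩, -⟩ := connSet_iff.1 (hconn1 m)
      obtain ⟨⟨g, hg⟩, -⟩ := connSet_iff.1 (hconn2 x)
      exact ⟨g, Set.mem_biUnion hx hg⟩
    · intro a ha b hb
      obtain ⟨x, hx, hax⟩ := by
        simpa using ha
      obtain ⟨y, hy, hby⟩ := by
        simpa using hb
      obtain ⟨w, hw⟩ := (connSet_iff.1 (hconn1 m)).2 x hx y hy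
      have hwalk : ∀ {x y : β} (w : H.Walk x y), (∀ u ∈ w.support, u ∈ μ m) →
          ∀ a ∈ ν x, ∀ b ∈ ν y, ReachIn G (⋃ y ∈ μ m, ν y) a b := by
        intro x y w
        induction w with
        | nil =>
            intro hw a ha b hb
            exact hνreach _ (hw _ (by simp)) a ha b hb
        | @cons x z y hadj w ih =>
            intro hw a ha b hb
            have hx : x ∈ μ m := hw x (by simp)
            have hz : z ∈ μ m := hw z (by simp)
            obtain ⟨a', ha', b', hb', hab'⟩ := hedge2 x z hadj
            have h1 := hνreach x hx a ha a' ha'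
            have h2 : ReachIn G (⋃ y ∈ μ m, ν y) a' b' :=
              ReachIn.of_adj (hsubν m x hx ha') (hsubν m z hz hb') hab'
            have h3 := ih (fun u hu => hw u (by simp [hu])) b' hb' b hb
            exact (h1.trans h2).trans h3
      exact hwalk w hw a hax b hby
  · intro m m' hne
    rw [Set.disjoint_left]
    intro g hg hg'
    obtain ⟨x, hx, hgx⟩ := by simpa using hg
    obtain ⟨y, hy, hgy⟩ := by simpa using hg'
    by_cases hxy : x = y
    · subst hxy
      exact Set.disjoint_left.1 (hdisj1 m m' hne) hx hy
    · exact Set.disjoint_left.1 (hdisj2 x y hxy) hgx hgy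
  · intro m m' hadj
    obtain ⟨x, hx, y, hy, hxy⟩ := hedge1 m m' hadj
    obtain ⟨a, ha, b, hb, hab⟩ := hedge2 x y hxy
    exact ⟨a, Set.mem_biUnion hx ha, b, Set.mem_biUnion hy hb, hab⟩

lemma finite_bounded_lists (k h : ℕ) : Finite {l : List (Fin k) // l.length ≤ h} := by
  have hinj : Function.Injective
      (fun (l : {l : List (Fin k) // l.length ≤ h}) => (fun i : Fin h => l.1[i.1]?)) := by
    intro l l' hll
    have hfun := congrFun hll
    apply Subtype.ext
    apply List.ext_getElem?
    intro n
    by_cases hn : n < h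
    · exact hfun ⟨n, hn⟩
    · rw [List.getElem?_eq_none (by omega : l.1.length ≤ n),
        List.getElem?_eq_none (by omega : l'.1.length ≤ n)]
  exact Finite.of_injective _ hinj

/-- Walks in a minor of a graph with a tree-depth-`h` structure are short. -/
lemma minor_path_bound {n m : ℕ} {G : SimpleGraph (Fin n)} {h : ℕ}
    (htd : TreeDepthLE G h) {M : SimpleGraph (Fin m)} {μ : Fin m → Set (Fin n)}
    (hμ : IsMinorMap M G μ) {a b : Fin m} (p : M.Walk a b) (hp : p.IsPath) :
    p.length + 2 ≤ 2^(h+1) := by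
  obtain ⟨par, hfix, hcmp⟩ := htd
  obtain ⟨hconn, hdisj, hedge⟩ := hμ
  refine key_lemma h (Fin n) G par hfix hcmp p.length (fun i => μ (p.getVert i))
    ?_ ?_ ?_ ?_
  · intro i _
    exact (connSet_iff.1 (hconn (p.getVert i))).1
  · intro i _ x hx y hy
    exact (connSet_iff.1 (hconn (p.getVert i))).2 x hx y hy
  · intro i j hi hj hij
    refine hdisj _ _ ?_
    intro hgv
    exact hij (isPath_getVert_inj p hp i j hi hj hgv)
  · intro i hi
    exact hedge _ _ (p.adj_getVert_succ hi)


-- ===== construction =====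

lemma td_construction {n : ℕ} (G : SimpleGraph (Fin n)) {h : ℕ} (htd : TreeDepthLE G h) :
    ∃ H : SimpleGraph (Fin n), H.IsAcyclic ∧ IsMinorMap H G (fun v => {v}) ∧
      ∃ B : Fin n → Set (Fin n), IsDeconstruction G H B ∧
        DeconWidthLE H B (2 * 2^(h+1) + 2) := by
  classical
  obtain ⟨q, hq1, hq2, hq3⟩ : ∃ q : Fin n → Fin n,
      (∀ v, q v = v ∨ G.Adj v (q v)) ∧
      (∀ u v, G.Adj u v → (∃ k, q^[k] u = v) ∨ (∃ k, q^[k] v = u)) ∧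
      (∀ v, ∃ ρ, q ρ = ρ ∧ ∃ k, q^[k] v = ρ) := by
    obtain ⟨q, _, hB2, hB3, hB4⟩ := dfs_forest G (Fintype.card (Fin n)) Finset.univ
      (by simp)
    exact ⟨q, fun v => (hB2 v (by simp)).2, fun u v hadj => hB3 u (by simp) v (by simp) hadj,
      fun v => hB4 v (by simp)⟩
  have hper : ∀ v p, 1 ≤ p → q^[p] v = v → q v = v := periodic_fixed_of_roots q hq3
  set D := 2^(h+1) with hDdef
  have hD2 : 2 ≤ D := by
    rw [hDdef]
    calc 2 = 2^1 := by norm_num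
    _ ≤ 2^(h+1) := Nat.pow_le_pow_right (by norm_num) (by omega)
  have hfixD : ∀ v, q (q^[D] v) = q^[D] v := by
    intro v
    by_contra hbad
    have key : ∀ i j, i < j → j ≤ D → q^[i] v = q^[j] v → False := by
      intro i j hij hj hcol
      have hperiodic : q^[j - i] (q^[i] v) = q^[i] v := by
        rw [← Function.iterate_add_apply]
        have heq : j - i + i = j := by omega
        rw [heq, ← hcol]
      have hfx : q (q^[i] v) = q^[i] v := hper _ (j - i) (by omega) hperiodic
      have hDfix : q^[D] v = q^[i] v := by
        have heq : D = (D - i) + i := by omega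
        rw [heq, Function.iterate_add_apply, iter_fixed_all q hfx]
      exact hbad (by rw [hDfix, hfx])
    have hinj : ∀ i j, i ≤ D → j ≤ D → q^[i] v = q^[j] v → i = j := by
      intro i j hi hj hcol
      by_contra hne
      rcases Nat.lt_or_ge i j with hl | hl
      · exact key i j hl hj hcol
      · exact key j i (by omega) hi hcol.symm
    obtain ⟨par, hfix, hcmp⟩ := htd
    have hbound := key_lemma h (Fin n) G par hfix hcmp D (fun i => {q^[i] v})
      (fun i _ => ⟨q^[i] v, rfl⟩)
      (fun i _ a ha b hb => by
        rw [Set.mem_singleton_iff] at ha hb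
        subst ha
        subst hb
        exact ReachIn.refl rfl)
      (fun i j hi hj hij => by
        rw [Set.disjoint_singleton]
        exact fun hc => hij (hinj i j hi hj hc))
      (fun i hi => by
        refine ⟨q^[i] v, rfl, q^[i+1] v, rfl, ?_⟩
        have hne' : q^[i] v ≠ q^[i+1] v :=
          fun hc => by have := hinj i (i+1) (by omega) (by omega) hc; omega
        rcases hq1 (q^[i] v) with hfx | hadj
        · exact absurd (by rw [Function.iterate_succ_apply', hfx] :
            q^[i+1] v = q^[i] v) hne'.symm
        · have : q^[i+1] v = q (q^[i] v) := Function.iterate_succ_apply' q i v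
          rw [this]
          exact hadj)
    omega
  -- the forest
  set H : SimpleGraph (Fin n) := SimpleGraph.fromRel (fun a b => q b = a) with hHdef
  have hHadj : ∀ u v, H.Adj u v ↔ u ≠ v ∧ (q v = u ∨ q u = v) := by
    intro u v
    rw [hHdef, SimpleGraph.fromRel_adj]
  have hHG : ∀ u v, H.Adj u v → G.Adj u v := by
    intro u v huv
    rw [hHadj] at huv
    rcases huv.2 with hqv | hqu
    · rcases hq1 v with hfx | hadj
      · exact absurd (by rw [← hqv, hfx]) huv.1
      · rw [← hqv]; exact hadj.symm
    · rcases hq1 u with hfx | hadj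
      · exact absurd (by rw [← hqu, hfx]) (Ne.symm huv.1)
      · rw [← hqu]; exact hadj
  -- rank function
  set rk : Fin n → ℕ := fun v => sInf {k | q (q^[k] v) = q^[k] v} with hrkdef
  have hrkne : ∀ v, {k | q (q^[k] v) = q^[k] v}.Nonempty := fun v => ⟨D, hfixD v⟩
  have hrkmem : ∀ v, q (q^[rk v] v) = q^[rk v] v := fun v => Nat.sInf_mem (hrkne v)
  have hrkstep : ∀ v, q v ≠ v → rk (q v) + 1 = rk v := by
    intro v hv
    have hshift : ∀ k, q^[k] (q v) = q^[k+1] v :=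
      fun k => (Function.iterate_succ_apply q k v).symm
    have h0 : rk v ≠ 0 := by
      intro h0
      have := hrkmem v
      rw [h0] at this
      exact hv this
    have hmemB : rk v - 1 ∈ {k | q (q^[k] (q v)) = q^[k] (q v)} := by
      rw [Set.mem_setOf_eq, hshift]
      have heq : rk v - 1 + 1 = rk v := by omega
      rw [heq]
      exact hrkmem v
    have h1 : rk (q v) ≤ rk v - 1 := Nat.sInf_le hmemB
    have h2 : rk v ≤ rk (q v) + 1 := by
      apply Nat.sInf_le
      rw [Set.mem_setOf_eq, ← hshift]
      exact hrkmem (q v)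
    omega
  have hgrad : ∀ u v, H.Adj u v → (u = q v ∧ rk u < rk v) ∨ (v = q u ∧ rk v < rk u) := by
    intro u v huv
    rw [hHadj] at huv
    rcases huv.2 with hqv | hqu
    · left
      have hvne : q v ≠ v := by rw [hqv]; exact huv.1
      have := hrkstep v hvne
      exact ⟨hqv.symm, by rw [← hqv]; omega⟩
    · right
      have hune : q u ≠ u := by rw [hqu]; exact Ne.symm huv.1
      have := hrkstep u hune
      exact ⟨hqu.symm, by rw [← hqu]; omega⟩
  have hacyc : H.IsAcyclic := acyclic_of_parent q rk hgrad
  have hminor : IsMinorMap H G (fun v => {v}) := by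
    refine ⟨fun v => connSet_singleton G v, ?_, ?_⟩
    · intro m m' hne
      rw [Set.disjoint_singleton]
      exact hne
    · intro m m' hadj
      exact ⟨m, rfl, m', rfl, hHG m m' hadj⟩
  refine ⟨H, hacyc, hminor, fun v => {x | ∃ k, q^[k] v = x}, ⟨?_, ?_⟩, ?_⟩
  · rintro g g' (rfl | hadj)
    · exact ⟨g, g, Or.inl rfl, Or.inl ⟨0, rfl⟩, Or.inl ⟨0, rfl⟩⟩
    · rcases hq2 g g' hadj with ⟨k, hk⟩ | ⟨k, hk⟩
      · exact ⟨g, g, Or.inl rfl, Or.inl ⟨0, rfl⟩, Or.inl ⟨k, hk⟩⟩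
      · exact ⟨g', g', Or.inl rfl, Or.inl ⟨k, hk⟩, Or.inl ⟨0, rfl⟩⟩
  · intro g
    have hsetsimp : {v : Fin n | g ∈ {x | ∃ k, q^[k] v = x}} = {v | ∃ k, q^[k] v = g} := by
      ext v; simp
    rw [ConnSet, hsetsimp]
    rw [← ConnSet]
    have claim : ∀ (k : ℕ) (v : Fin n), q^[k] v = g →
        ReachIn H {v | ∃ k, q^[k] v = g} v g := by
      intro k
      induction k with
      | zero => intro v hv; subst hv; exact ReachIn.refl ⟨0, rfl⟩
      | succ k ih =>
          intro v hv
          by_cases hfv : q v = v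
          · have : q^[k+1] v = v := iter_fixed_all q hfv (k+1)
            rw [this] at hv
            subst hv
            exact ReachIn.refl ⟨0, rfl⟩
          · have hadj : H.Adj v (q v) := by
              rw [hHadj]
              exact ⟨fun hc => hfv hc.symm, Or.inr rfl⟩
            have hk' : q^[k] (q v) = g := by
              rw [← Function.iterate_succ_apply]
              exact hv
            exact (ReachIn.of_adj (s := {v | ∃ k, q^[k] v = g}) ⟨k+1, hv⟩
              ⟨k, hk'⟩ hadj).trans (ih (q v) hk')
    rw [connSet_iff]
    refine ⟨⟨g, ⟨0, rfl⟩⟩, ?_⟩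
    rintro a ⟨ka, hka⟩ b ⟨kb, hkb⟩
    exact (claim ka a hka).trans (claim kb b hkb).symm
  · intro a b _
    have hBsub : ∀ v : Fin n, {x | ∃ k, q^[k] v = x} ⊆
        ↑((Finset.range (D+1)).image (fun k => q^[k] v)) := by
      rintro v x ⟨k, hk⟩
      by_cases hkD : k ≤ D
      · rw [Finset.coe_image, Set.mem_image]
        exact ⟨k, by simp [Finset.mem_range]; omega, hk⟩
      · have : q^[k] v = q^[D] v := iter_ge q hfixD (by omega) v
        rw [Finset.coe_image, Set.mem_image]
        exact ⟨D, by simp, by rw [← this, hk]⟩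
    have hBcard : ∀ v : Fin n, ({x | ∃ k, q^[k] v = x} : Set (Fin n)).ncard ≤ D + 1 := by
      intro v
      calc ({x | ∃ k, q^[k] v = x} : Set (Fin n)).ncard
          ≤ (↑((Finset.range (D+1)).image (fun k => q^[k] v)) : Set (Fin n)).ncard :=
            Set.ncard_le_ncard (hBsub v) (Set.toFinite _)
        _ = ((Finset.range (D+1)).image (fun k => q^[k] v)).card := Set.ncard_coe_finset _
        _ ≤ (Finset.range (D+1)).card := Finset.card_image_le
        _ = D + 1 := Finset.card_range _
    calc ({x | ∃ k, q^[k] a = x} ∪ {x | ∃ k, q^[k] b = x} : Set (Fin n)).ncard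
        ≤ ({x | ∃ k, q^[k] a = x} : Set (Fin n)).ncard
          + ({x | ∃ k, q^[k] b = x} : Set (Fin n)).ncard := Set.ncard_union_le _ _
      _ ≤ 2 * 2^(h+1) + 2 := by
          have := hBcard a; have := hBcard b; omega


def tailMap (d k : ℕ) (l : {l : List (Fin k) // l.length ≤ d}) :
    {l : List (Fin k) // l.length ≤ d} :=
  ⟨l.1.tail, by have := l.2; have := List.length_tail (l := l.1); omega⟩

lemma kAryTree_grad (d k : ℕ) : ∀ u v, (kAryTree d k).Adj u v →
    (u = tailMap d k v ∧ u.1.length < v.1.length) ∨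
    (v = tailMap d k u ∧ v.1.length < u.1.length) := by
  intro u v huv
  rw [kAryTree, SimpleGraph.fromRel_adj] at huv
  rcases huv.2 with ⟨i, hv⟩ | ⟨i, hu⟩
  · left
    constructor
    · apply Subtype.ext
      show (u : List (Fin k)) = (v : List (Fin k)).tail
      rw [hv]
      rfl
    · rw [hv]; simp
  · right
    constructor
    · apply Subtype.ext
      show (v : List (Fin k)) = (u : List (Fin k)).tail
      rw [hu]
      rfl
    · rw [hu]; simp

/-- if `𝒢` has bounded tree depth and `ℋ` is the class of all
forests that are minors of graphs in `𝒢`, then `ℋ` is a class of forests of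
bounded height, `𝒢 ≡ ℋ`, and `𝒢` and `ℋ` have the same stack depth. -/
theorem graphs_to_forests (𝒢 : Set FinGraph) (hbtd : HasBoundedTreeDepth 𝒢)
    (ℋ : Set FinGraph)
    (hH : ℋ = {M : FinGraph | M.G.IsAcyclic ∧ ∃ G ∈ 𝒢, IsMinor M G}) :
    (∃ e : ℕ, ∀ H ∈ ℋ, forestHeightLE H e) ∧
    DeconEquiv 𝒢 ℋ ∧
    (∀ d : ℕ, HasStackDepth 𝒢 d ↔ HasStackDepth ℋ d) := by
  obtain ⟨h, htd⟩ := hbtd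
  subst hH
  refine ⟨?_, ⟨?_, ?_⟩, ?_⟩
  · -- bounded forest height
    refine ⟨2^(h+1), ?_⟩
    rintro H ⟨hacyc, G, hG, μ, hμ⟩
    intro v
    refine ⟨v, SimpleGraph.Reachable.refl v, ?_⟩
    intro u hu
    obtain ⟨p, hp, hlen⟩ := hu.exists_path_of_dist
    have := minor_path_bound (htd G hG) hμ p hp
    omega
  · -- 𝒢 ≼ ℋ
    refine ⟨2 * 2^(h+1) + 2, ?_⟩
    intro G hG
    obtain ⟨H, hacyc, hminor, B, hdecon, hwidth⟩ := td_construction G.G (htd G hG)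
    exact ⟨⟨G.n, H⟩, ⟨hacyc, G, hG, fun v => {v}, hminor⟩, B, hdecon, hwidth⟩
  · -- ℋ ≼ 𝒢
    refine ⟨2, ?_⟩
    rintro H ⟨hacyc, G, hG, μ, hμ⟩
    obtain ⟨B, hdecon, hwidth⟩ := minor_decon hμ
    exact ⟨G, hG, B, hdecon, hwidth⟩
  · -- stack depths
    have hSA : ∀ d, StackAll 𝒢 d ↔
        StackAll {M : FinGraph | M.G.IsAcyclic ∧ ∃ G ∈ 𝒢, IsMinor M G} d := by
      intro d
      constructor
      · intro hs k hk
        obtain ⟨G, hG, μ0, hμ0⟩ := hs k hk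
        haveI : Finite {l : List (Fin k) // l.length ≤ d} := finite_bounded_lists k d
        haveI : Fintype {l : List (Fin k) // l.length ≤ d} := Fintype.ofFinite _
        have e : Fin (Fintype.card {l : List (Fin k) // l.length ≤ d}) ≃
            {l : List (Fin k) // l.length ≤ d} :=
          (Fintype.equivFin {l : List (Fin k) // l.length ≤ d}).symm
        refine ⟨⟨Fintype.card {l : List (Fin k) // l.length ≤ d}, (kAryTree d k).comap ⇑e⟩, ⟨?_, G, hG, fun a => μ0 (e a),
          ?_, ?_, ?_⟩, fun t => {e.symm t}, ?_, ?_, ?_⟩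
        · -- acyclic
          apply acyclic_of_parent (fun a => e.symm (tailMap d k (e a)))
            (fun a => (e a).1.length)
          intro a b hab
          rw [SimpleGraph.comap_adj] at hab
          rcases kAryTree_grad d k (e a) (e b) hab with ⟨heq, hlt⟩ | ⟨heq, hlt⟩
          · left
            exact ⟨by rw [Equiv.eq_symm_apply]; exact heq, hlt⟩
          · right
            exact ⟨by rw [Equiv.eq_symm_apply]; exact heq, hlt⟩
        · -- minor of G: connectivity
          intro a
          dsimp only
          exact hμ0.1 (e a)
        · intro a b hne
          dsimp only
          exact hμ0.2.1 (e a) (e b) (fun hc => hne (e.injective hc))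
        · intro a b hab
          rw [SimpleGraph.comap_adj] at hab
          dsimp only
          exact hμ0.2.2 (e a) (e b) hab
        · -- minor map from kAryTree to the copy: connectivity
          exact fun t => connSet_singleton _ (e.symm t)
        · intro t t' hne
          rw [Set.disjoint_singleton]
          exact fun hc => hne (e.symm.injective hc)
        · intro t t' hadj
          refine ⟨e.symm t, rfl, e.symm t', rfl, ?_⟩
          rw [SimpleGraph.comap_adj, Equiv.apply_symm_apply, Equiv.apply_symm_apply]
          exact hadj
      · intro hs k hk
        obtain ⟨H, hHm, μ, hμ⟩ := hs k hk
        obtain ⟨_, G, hG, ν, hν⟩ := hHm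
        exact ⟨G, hG, fun t => ⋃ x ∈ μ t, ν x, minor_comp hμ hν⟩
    intro d
    unfold HasStackDepth
    rw [hSA d, hSA (d+1)]
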